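/- Let q ≥ 0 and let 0 < ρ₋ ≤ ρ₊, u₊ ≥ 0, 0 < λ₋ ≤ λ₊ be given. Then there exists a constant C > 0, depending only on q, ρ₋, ρ₊, u₊, λ₋, λ₊, with the following property. For i = 1, 2, let ρᵢ ∈ [ρ₋, ρ₊], Uᵢ ∈ ℝ³ with |Uᵢ| ≤ u₊, and 𝒯ᵢ a real symmetric 3×3 matrix with λ₋|k|² ≤ kᵀ𝒯ᵢk ≤ λ₊|k|² for all k ∈ ℝ³, and define the ellipsoidal Gaussians Mᵢ(v) = ρᵢ/√(det(2π𝒯ᵢ)) · exp(−½(v−Uᵢ)ᵀ𝒯ᵢ⁻¹(v−Uᵢ)). Then sup_{v∈ℝ³} (1+|v|)^q |M₁(v) − M₂(v)| ≤ C·(|ρ₁ − ρ₂| + |U₁ − U₂| + ‖𝒯₁ − 𝒯₂‖), where ‖·‖ is the entrywise maximum norm (or any fixed norm) on 3×3 matrices. -/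

import Mathlib

noncomputable section

open Real MeasureTheory

/-- Velocity space `ℝ³`. -/
abbrev V3 := Fin 3 → ℝ

/-- Velocity grid index set `ℤ³`. -/
abbrev Idx3 := Fin 3 → ℤ

/-- Euclidean norm on `V3`. -/
def enorm3 (v : V3) : ℝ := Real.sqrt (∑ a, v a ^ 2)

/-- The velocity grid node `v_j = jΔv`. -/
def gridV (Δv : ℝ) (j : Idx3) : V3 := fun a => (j a : ℝ) * Δv

/-- Quadratic form `kᵀ A k` of a 3×3 matrix. -/
def quadForm (A : Matrix (Fin 3) (Fin 3) ℝ) (k : V3) : ℝ := ∑ a, ∑ b, k a * A a b * k b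

/-- The ellipsoidal Gaussian with density `ρ`, bulk velocity `U` and temperature tensor `T`. -/
def gaussianM (ρ : ℝ) (U : V3) (T : Matrix (Fin 3) (Fin 3) ℝ) (v : V3) : ℝ :=
  ρ / Real.sqrt ((2 * π) ^ 3 * T.det) *
    Real.exp (-(1 / 2) * quadForm T⁻¹ (fun a => v a - U a))

/-- Discrete density. -/
def dRho (Δv : ℝ) (h : Idx3 → ℝ) : ℝ := ∑' j : Idx3, h j * Δv ^ 3

/-- Discrete bulk velocity. -/
def dU (Δv : ℝ) (h : Idx3 → ℝ) : V3 :=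
  fun a => (dRho Δv h)⁻¹ * ∑' j : Idx3, h j * gridV Δv j a * Δv ^ 3

/-- Discrete temperature. -/
def dT (Δv : ℝ) (h : Idx3 → ℝ) : ℝ :=
  (3 * dRho Δv h)⁻¹ * ∑' j : Idx3, h j * enorm3 (fun a => gridV Δv j a - dU Δv h a) ^ 2 * Δv ^ 3

/-- Discrete stress tensor. -/
def dTheta (Δv : ℝ) (h : Idx3 → ℝ) : Matrix (Fin 3) (Fin 3) ℝ :=
  Matrix.of fun a b =>
    (dRho Δv h)⁻¹ *
      ∑' j : Idx3, h j * (gridV Δv j a - dU Δv h a) * (gridV Δv j b - dU Δv h b) * Δv ^ 3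

/-- The temperature tensor `(1−ν)T·Id + νΘ`. -/
def tensorOf (ν T : ℝ) (Θ : Matrix (Fin 3) (Fin 3) ℝ) : Matrix (Fin 3) (Fin 3) ℝ :=
  ((1 - ν) * T) • (1 : Matrix (Fin 3) (Fin 3) ℝ) + ν • Θ

/-- Continuous density. -/
def cRho (F : V3 → ℝ) : ℝ := ∫ v : V3, F v

/-- Continuous bulk velocity. -/
def cU (F : V3 → ℝ) : V3 := fun a => (cRho F)⁻¹ * ∫ v : V3, F v * v a

/-- Continuous temperature. -/
def cT (F : V3 → ℝ) : ℝ :=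
  (3 * cRho F)⁻¹ * ∫ v : V3, F v * enorm3 (fun a => v a - cU F a) ^ 2

/-- Continuous stress tensor. -/
def cTheta (F : V3 → ℝ) : Matrix (Fin 3) (Fin 3) ℝ :=
  Matrix.of fun a b => (cRho F)⁻¹ * ∫ v : V3, F v * (v a - cU F a) * (v b - cU F b)

/-- Collision frequency `A_ν = (1−ν)⁻¹`. -/
def Anu (ν : ℝ) : ℝ := (1 - ν)⁻¹

/-- The modified relaxation parameter `nt = κν/(κ+Δt)`. -/
def nuTilde (κ ν Δt : ℝ) : ℝ := κ * ν / (κ + Δt)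

/-- `s(i,j)`: the unique integer with `sΔx ≤ iΔx − Δt v_{j,1} < (s+1)Δx`. -/
def sIdx (Δx Δt Δv : ℝ) (i : ℤ) (j : Idx3) : ℤ :=
  ⌊((i : ℝ) * Δx - Δt * ((j 0 : ℝ) * Δv)) / Δx⌋

/-- Linear reconstruction of a grid function at the foot of the characteristic. -/
def recon (Δx Δt Δv : ℝ) (g : ℤ → Idx3 → ℝ) (i : ℤ) (j : Idx3) : ℝ :=
  (((i : ℝ) * Δx - Δt * ((j 0 : ℝ) * Δv) - (sIdx Δx Δt Δv i j : ℝ) * Δx) / Δx) *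
      g (sIdx Δx Δt Δv i j + 1) j
    + ((((sIdx Δx Δt Δv i j : ℝ) + 1) * Δx - ((i : ℝ) * Δx - Δt * ((j 0 : ℝ) * Δv))) / Δx) *
      g (sIdx Δx Δt Δv i j) j

/-- Discrete ellipsoidal Gaussian built from a velocity grid function `h`. -/
def gaussD (nt Δv : ℝ) (h : Idx3 → ℝ) (j : Idx3) : ℝ :=
  gaussianM (dRho Δv h) (dU Δv h) (tensorOf nt (dT Δv h) (dTheta Δv h)) (gridV Δv j)

/-- The shifted initial datum `v ↦ f₀(x_i − Δt v₁, v)`. -/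
def shift0 (f₀ : ℝ → V3 → ℝ) (Δx Δt : ℝ) (i : ℤ) : V3 → ℝ :=
  fun v => f₀ ((i : ℝ) * Δx - Δt * v 0) v

/-- Step-0 ellipsoidal Gaussian, built from the continuous macroscopic fields of `f̃⁰`. -/
def gauss0 (f₀ : ℝ → V3 → ℝ) (κ ν Δx Δt Δv : ℝ) (i : ℤ) (j : Idx3) : ℝ :=
  gaussianM (cRho (shift0 f₀ Δx Δt i)) (cU (shift0 f₀ Δx Δt i))
    (tensorOf (nuTilde κ ν Δt) (cT (shift0 f₀ Δx Δt i)) (cTheta (shift0 f₀ Δx Δt i)))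
    (gridV Δv j)

/-- `f̃⁰_{i,j} = f₀(x_i − Δt v_{j,1}, v_j)`. -/
def tilde0 (f₀ : ℝ → V3 → ℝ) (Δx Δt Δv : ℝ) (i : ℤ) (j : Idx3) : ℝ :=
  f₀ ((i : ℝ) * Δx - Δt * ((j 0 : ℝ) * Δv)) (gridV Δv j)

/-- The semi-Lagrangian scheme iterates `fⁿ_{i,j}`. -/
def schemeF (f₀ : ℝ → V3 → ℝ) (κ ν Δx Δt Δv : ℝ) : ℕ → ℤ → Idx3 → ℝ
  | 0 => fun i j => f₀ ((i : ℝ) * Δx) (gridV Δv j)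
  | 1 => fun i j =>
      (κ / (κ + Anu ν * Δt)) * tilde0 f₀ Δx Δt Δv i j
        + (Anu ν * Δt / (κ + Anu ν * Δt)) * gauss0 f₀ κ ν Δx Δt Δv i j
  | (n + 2) => fun i j =>
      (κ / (κ + Anu ν * Δt)) * recon Δx Δt Δv (schemeF f₀ κ ν Δx Δt Δv (n + 1)) i j
        + (Anu ν * Δt / (κ + Anu ν * Δt)) *
            gaussD (nuTilde κ ν Δt) Δv (recon Δx Δt Δv (schemeF f₀ κ ν Δx Δt Δv (n + 1)) i) j

/-- The reconstructed scheme iterates `f̃ⁿ_{i,j}`. -/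
def schemeTilde (f₀ : ℝ → V3 → ℝ) (κ ν Δx Δt Δv : ℝ) : ℕ → ℤ → Idx3 → ℝ
  | 0 => tilde0 f₀ Δx Δt Δv
  | (n + 1) => recon Δx Δt Δv (schemeF f₀ κ ν Δx Δt Δv (n + 1))

/-- The ellipsoidal Gaussian used in the `n → n+1` update of the scheme. -/
def schemeGauss (f₀ : ℝ → V3 → ℝ) (κ ν Δx Δt Δv : ℝ) : ℕ → ℤ → Idx3 → ℝ
  | 0 => gauss0 f₀ κ ν Δx Δt Δv
  | (n + 1) => fun i j =>
      gaussD (nuTilde κ ν Δt) Δv (schemeTilde f₀ κ ν Δx Δt Δv (n + 1) i) j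

/-- Discrete density of `f̃ⁿ` at spatial node `i` (continuous fields at step 0). -/
def schemeRho (f₀ : ℝ → V3 → ℝ) (κ ν Δx Δt Δv : ℝ) : ℕ → ℤ → ℝ
  | 0 => fun i => cRho (shift0 f₀ Δx Δt i)
  | (n + 1) => fun i => dRho Δv (schemeTilde f₀ κ ν Δx Δt Δv (n + 1) i)

/-- Discrete bulk velocity of `f̃ⁿ` at spatial node `i` (continuous fields at step 0). -/
def schemeU (f₀ : ℝ → V3 → ℝ) (κ ν Δx Δt Δv : ℝ) : ℕ → ℤ → V3
  | 0 => fun i => cU (shift0 f₀ Δx Δt i)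
  | (n + 1) => fun i => dU Δv (schemeTilde f₀ κ ν Δx Δt Δv (n + 1) i)

/-- Discrete temperature of `f̃ⁿ` at spatial node `i` (continuous fields at step 0). -/
def schemeTemp (f₀ : ℝ → V3 → ℝ) (κ ν Δx Δt Δv : ℝ) : ℕ → ℤ → ℝ
  | 0 => fun i => cT (shift0 f₀ Δx Δt i)
  | (n + 1) => fun i => dT Δv (schemeTilde f₀ κ ν Δx Δt Δv (n + 1) i)

/-- Weighted `L∞_q` norm of the initial datum. -/
def normLq (q : ℝ) (f₀ : ℝ → V3 → ℝ) : ℝ :=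
  ⨆ x : ℝ, ⨆ v : V3, |f₀ x v| * (1 + enorm3 v) ^ q

open Matrix

namespace GLaux

lemma enorm3_nonneg (v : V3) : 0 ≤ enorm3 v := Real.sqrt_nonneg _

lemma sq_enorm3 (v : V3) : enorm3 v ^ 2 = ∑ a, v a ^ 2 := by
  rw [enorm3, Real.sq_sqrt]; positivity

lemma abs_le_enorm3 (v : V3) (a : Fin 3) : |v a| ≤ enorm3 v := by
  rw [enorm3, ← Real.sqrt_sq_eq_abs]
  apply Real.sqrt_le_sqrt
  exact Finset.single_le_sum (fun i _ => sq_nonneg (v i)) (Finset.mem_univ a)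

lemma dot_le (x y : V3) : ∑ a, x a * y a ≤ enorm3 x * enorm3 y := by
  have h : (∑ a, x a * y a) ^ 2 ≤ (enorm3 x * enorm3 y) ^ 2 := by
    rw [mul_pow, sq_enorm3, sq_enorm3]
    exact Finset.sum_mul_sq_le_sq_mul_sq Finset.univ x y
  calc ∑ a, x a * y a ≤ |∑ a, x a * y a| := le_abs_self _
    _ = Real.sqrt ((∑ a, x a * y a) ^ 2) := (Real.sqrt_sq_eq_abs _).symm
    _ ≤ Real.sqrt ((enorm3 x * enorm3 y) ^ 2) := Real.sqrt_le_sqrt h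
    _ = enorm3 x * enorm3 y := Real.sqrt_sq (mul_nonneg (enorm3_nonneg x) (enorm3_nonneg y))

lemma enorm3_add_le (x y : V3) : enorm3 (fun a => x a + y a) ≤ enorm3 x + enorm3 y := by
  have hd := dot_le x y
  rw [enorm3]
  have hsum : ∑ a, (x a + y a) ^ 2 ≤ (enorm3 x + enorm3 y) ^ 2 := by
    have e : ∑ a, (x a + y a) ^ 2
        = (∑ a, x a ^ 2) + 2 * (∑ a, x a * y a) + ∑ a, y a ^ 2 := by
      rw [Finset.mul_sum, ← Finset.sum_add_distrib, ← Finset.sum_add_distrib]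
      exact Finset.sum_congr rfl fun a _ => by ring
    rw [e, add_sq, ← sq_enorm3, ← sq_enorm3]
    nlinarith [hd]
  calc Real.sqrt (∑ a, (x a + y a) ^ 2) ≤ Real.sqrt ((enorm3 x + enorm3 y) ^ 2) :=
        Real.sqrt_le_sqrt hsum
    _ = enorm3 x + enorm3 y := Real.sqrt_sq (add_nonneg (enorm3_nonneg x) (enorm3_nonneg y))

lemma enorm3_pos (v : V3) (hv : v ≠ 0) : 0 < enorm3 v := by
  rcases Function.ne_iff.mp hv with ⟨a, ha⟩
  calc (0:ℝ) < |v a| := abs_pos.mpr ha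
    _ ≤ enorm3 v := abs_le_enorm3 v a

lemma quadForm_eq_dot (A : Matrix (Fin 3) (Fin 3) ℝ) (k : V3) :
    quadForm A k = k ⬝ᵥ A.mulVec k := by
  simp [quadForm, dotProduct, Matrix.mulVec, Finset.mul_sum, mul_assoc]


def bilin (A : Matrix (Fin 3) (Fin 3) ℝ) (x y : V3) : ℝ := ∑ a, ∑ b, x a * A a b * y b

lemma bilin_self (A : Matrix (Fin 3) (Fin 3) ℝ) (x : V3) : bilin A x x = quadForm A x := rfl

lemma bilin_symm (A : Matrix (Fin 3) (Fin 3) ℝ) (hA : A.IsSymm) (x y : V3) :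
    bilin A x y = bilin A y x := by
  rw [bilin, bilin, Finset.sum_comm]
  refine Finset.sum_congr rfl fun a _ => Finset.sum_congr rfl fun b _ => ?_
  have : A b a = A a b := by
    conv_lhs => rw [← hA]
    rfl
  rw [this]; ring

lemma quadForm_add (A : Matrix (Fin 3) (Fin 3) ℝ) (x y : V3) :
    quadForm A (fun a => x a + y a)
      = quadForm A x + bilin A x y + bilin A y x + quadForm A y := by
  simp only [quadForm, bilin]
  rw [← Finset.sum_add_distrib, ← Finset.sum_add_distrib, ← Finset.sum_add_distrib]
  refine Finset.sum_congr rfl fun a _ => ?_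
  rw [← Finset.sum_add_distrib, ← Finset.sum_add_distrib, ← Finset.sum_add_distrib]
  exact Finset.sum_congr rfl fun b _ => by ring

lemma quadForm_smul (A : Matrix (Fin 3) (Fin 3) ℝ) (t : ℝ) (y : V3) :
    quadForm A (fun a => t * y a) = t ^ 2 * quadForm A y := by
  simp only [quadForm, Finset.mul_sum]
  exact Finset.sum_congr rfl fun a _ => Finset.sum_congr rfl fun b _ => by ring

lemma bilin_smul_right (A : Matrix (Fin 3) (Fin 3) ℝ) (t : ℝ) (x y : V3) :
    bilin A x (fun a => t * y a) = t * bilin A x y := by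
  simp only [bilin, Finset.mul_sum]
  exact Finset.sum_congr rfl fun a _ => Finset.sum_congr rfl fun b _ => by ring

lemma bilin_smul_left (A : Matrix (Fin 3) (Fin 3) ℝ) (t : ℝ) (x y : V3) :
    bilin A (fun a => t * x a) y = t * bilin A x y := by
  simp only [bilin, Finset.mul_sum]
  exact Finset.sum_congr rfl fun a _ => Finset.sum_congr rfl fun b _ => by ring

/-- Cauchy–Schwarz for a symmetric positive-semidefinite bilinear form. -/
lemma bilin_cs (A : Matrix (Fin 3) (Fin 3) ℝ) (hA : A.IsSymm)
    (hpos : ∀ k : V3, 0 ≤ quadForm A k) (x y : V3) :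
    bilin A x y ^ 2 ≤ quadForm A x * quadForm A y := by
  have key : ∀ t : ℝ, 0 ≤ quadForm A y * (t * t) + (2 * bilin A x y) * t + quadForm A x := by
    intro t
    have h := hpos (fun a => x a + t * y a)
    have e : quadForm A (fun a => x a + t * y a)
        = quadForm A y * (t * t) + (2 * bilin A x y) * t + quadForm A x := by
      rw [quadForm_add A x (fun a => t * y a), bilin_smul_right, bilin_smul_left,
        quadForm_smul, bilin_symm A hA y x]
      ring
    linarith [e ▸ h]
  have hd := discrim_le_zero key
  rw [discrim] at hd
  nlinarith [hd]

lemma quadForm_sub_apply (A B : Matrix (Fin 3) (Fin 3) ℝ) (k : V3) :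
    quadForm (A - B) k = quadForm A k - quadForm B k := by
  simp only [quadForm, ← Finset.sum_sub_distrib]
  exact Finset.sum_congr rfl fun a _ => Finset.sum_congr rfl fun b _ => by
    simp [Matrix.sub_apply]; ring

lemma abs_quadForm_le (A : Matrix (Fin 3) (Fin 3) ℝ) (k : V3) :
    |quadForm A k| ≤ (∑ a, ∑ b, |A a b|) * enorm3 k ^ 2 := by
  calc |quadForm A k| ≤ ∑ a, ∑ b, |k a * A a b * k b| := by
        refine (Finset.abs_sum_le_sum_abs _ _).trans ?_
        exact Finset.sum_le_sum fun a _ => Finset.abs_sum_le_sum_abs _ _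
    _ ≤ ∑ a, ∑ b, |A a b| * enorm3 k ^ 2 := by
        refine Finset.sum_le_sum fun a _ => Finset.sum_le_sum fun b _ => ?_
        rw [abs_mul, abs_mul]
        calc |k a| * |A a b| * |k b| ≤ enorm3 k * |A a b| * enorm3 k := by
              apply mul_le_mul (mul_le_mul_of_nonneg_right (abs_le_enorm3 k a) (abs_nonneg _))
                (abs_le_enorm3 k b) (abs_nonneg _)
              exact mul_nonneg (enorm3_nonneg k) (abs_nonneg _)
          _ = |A a b| * enorm3 k ^ 2 := by ring
    _ = (∑ a, ∑ b, |A a b|) * enorm3 k ^ 2 := by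
        rw [Finset.sum_mul]
        exact Finset.sum_congr rfl fun a _ => (Finset.sum_mul _ _ _).symm


section Tensor
variable {lm lM : ℝ} (𝒯 : Matrix (Fin 3) (Fin 3) ℝ)

lemma posDef_of (hsym : 𝒯.IsSymm) (hlm : 0 < lm)
    (hlow : ∀ k : V3, lm * enorm3 k ^ 2 ≤ quadForm 𝒯 k) : 𝒯.PosDef := by
  refine Matrix.posDef_iff_dotProduct_mulVec.mpr ⟨?_, ?_⟩
  · rwa [Matrix.IsHermitian, Matrix.conjTranspose_eq_transpose_of_trivial]
  · intro x hx
    have h1 := hlow x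
    have h2 : 0 < lm * enorm3 x ^ 2 := by
      have := enorm3_pos x hx
      positivity
    rw [quadForm_eq_dot] at h1
    simpa using lt_of_lt_of_le h2 h1

lemma isUnit_det_of (hsym : 𝒯.IsSymm) (hlm : 0 < lm)
    (hlow : ∀ k : V3, lm * enorm3 k ^ 2 ≤ quadForm 𝒯 k) : IsUnit 𝒯.det :=
  isUnit_iff_ne_zero.mpr (ne_of_gt (posDef_of 𝒯 hsym hlm hlow).det_pos)

lemma inv_isSymm (hsym : 𝒯.IsSymm) : (𝒯⁻¹).IsSymm := by
  rw [Matrix.IsSymm, Matrix.transpose_nonsing_inv, hsym]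

lemma quadForm_inv_nonneg (hsym : 𝒯.IsSymm) (hlm : 0 < lm)
    (hlow : ∀ k : V3, lm * enorm3 k ^ 2 ≤ quadForm 𝒯 k) (k : V3) :
    0 ≤ quadForm 𝒯⁻¹ k := by
  have h := ((posDef_of 𝒯 hsym hlm hlow).inv).posSemidef.dotProduct_mulVec_nonneg k
  rw [quadForm_eq_dot]
  simpa using h

lemma mulVec_inv_cancel (hsym : 𝒯.IsSymm) (hlm : 0 < lm)
    (hlow : ∀ k : V3, lm * enorm3 k ^ 2 ≤ quadForm 𝒯 k) (k : V3) :
    𝒯.mulVec (𝒯⁻¹.mulVec k) = k := by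
  rw [Matrix.mulVec_mulVec, Matrix.mul_nonsing_inv _ (isUnit_det_of 𝒯 hsym hlm hlow)]
  simp

lemma quadForm_inv_eq (hsym : 𝒯.IsSymm) (hlm : 0 < lm)
    (hlow : ∀ k : V3, lm * enorm3 k ^ 2 ≤ quadForm 𝒯 k) (k : V3) :
    quadForm 𝒯⁻¹ k = quadForm 𝒯 (𝒯⁻¹.mulVec k) := by
  set y := 𝒯⁻¹.mulVec k with hy
  have hk : 𝒯.mulVec y = k := mulVec_inv_cancel 𝒯 hsym hlm hlow k
  rw [quadForm_eq_dot, quadForm_eq_dot, hk]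
  exact dotProduct_comm k y

lemma dot_eq_sum (x y : V3) : x ⬝ᵥ y = ∑ a, x a * y a := rfl

lemma quadForm_inv_le (hsym : 𝒯.IsSymm) (hlm : 0 < lm)
    (hlow : ∀ k : V3, lm * enorm3 k ^ 2 ≤ quadForm 𝒯 k)
    (hup : ∀ k : V3, quadForm 𝒯 k ≤ lM * enorm3 k ^ 2) (k : V3) :
    quadForm 𝒯⁻¹ k ≤ lm⁻¹ * enorm3 k ^ 2 := by
  set y := 𝒯⁻¹.mulVec k with hy
  have heq : quadForm 𝒯⁻¹ k = quadForm 𝒯 y := quadForm_inv_eq 𝒯 hsym hlm hlow k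
  have hdot : quadForm 𝒯⁻¹ k = ∑ a, k a * y a := by rw [quadForm_eq_dot]; rfl
  have hcs : ∑ a, k a * y a ≤ enorm3 k * enorm3 y := dot_le k y
  rcases eq_or_lt_of_le (enorm3_nonneg y) with h0 | h0
  · have : quadForm 𝒯 y ≤ lM * enorm3 y ^ 2 := hup y
    rw [← h0] at this
    have hnn : 0 ≤ enorm3 k ^ 2 := sq_nonneg _
    rw [heq]
    calc quadForm 𝒯 y ≤ lM * 0 ^ 2 := this
      _ = 0 := by ring
      _ ≤ lm⁻¹ * enorm3 k ^ 2 := by positivity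
  · have h1 : lm * enorm3 y ^ 2 ≤ enorm3 k * enorm3 y := by
      calc lm * enorm3 y ^ 2 ≤ quadForm 𝒯 y := hlow y
        _ = quadForm 𝒯⁻¹ k := heq.symm
        _ = ∑ a, k a * y a := hdot
        _ ≤ enorm3 k * enorm3 y := hcs
    have h2 : lm * enorm3 y ≤ enorm3 k := by
      have h1' : (lm * enorm3 y) * enorm3 y ≤ enorm3 k * enorm3 y := by nlinarith [h1]
      exact le_of_mul_le_mul_right h1' h0
    calc quadForm 𝒯⁻¹ k = ∑ a, k a * y a := hdot
      _ ≤ enorm3 k * enorm3 y := hcs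
      _ ≤ enorm3 k * (lm⁻¹ * enorm3 k) := by
          apply mul_le_mul_of_nonneg_left _ (enorm3_nonneg k)
          rw [le_inv_mul_iff₀ hlm]
          linarith [h2]
      _ = lm⁻¹ * enorm3 k ^ 2 := by ring


lemma bilin_single (A : Matrix (Fin 3) (Fin 3) ℝ) (a b : Fin 3) :
    bilin A (Pi.single a 1) (Pi.single b 1) = A a b := by
  simp [bilin, Pi.single_apply]

lemma enorm3_single_sq (a : Fin 3) : enorm3 (Pi.single a (1:ℝ)) ^ 2 = 1 := by
  rw [sq_enorm3]
  simp [Pi.single_apply]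

/-- Entry bound for a symmetric matrix whose quadratic form is between `0` and `c ‖k‖²`. -/
lemma entry_abs_le {c : ℝ} (A : Matrix (Fin 3) (Fin 3) ℝ) (hA : A.IsSymm)
    (h0 : ∀ k : V3, 0 ≤ quadForm A k) (hc : ∀ k : V3, quadForm A k ≤ c * enorm3 k ^ 2)
    (a b : Fin 3) : |A a b| ≤ c := by
  have hc0 : 0 ≤ c := by
    have h1 := h0 (Pi.single a 1)
    have h2 := hc (Pi.single a 1)
    rw [enorm3_single_sq] at h2
    linarith
  have hqa : quadForm A (Pi.single a 1) ≤ c := by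
    have := hc (Pi.single a 1); rwa [enorm3_single_sq, mul_one] at this
  have hqb : quadForm A (Pi.single b 1) ≤ c := by
    have := hc (Pi.single b 1); rwa [enorm3_single_sq, mul_one] at this
  have hcs := bilin_cs A hA h0 (Pi.single a 1) (Pi.single b 1)
  rw [bilin_single] at hcs
  have : A a b ^ 2 ≤ c ^ 2 := by
    calc A a b ^ 2 ≤ quadForm A (Pi.single a 1) * quadForm A (Pi.single b 1) := hcs
      _ ≤ c * c := mul_le_mul hqa hqb (h0 _) hc0
      _ = c ^ 2 := (sq c).symm
  calc |A a b| = Real.sqrt (A a b ^ 2) := (Real.sqrt_sq_eq_abs _).symm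
    _ ≤ Real.sqrt (c ^ 2) := Real.sqrt_le_sqrt this
    _ = c := Real.sqrt_sq hc0

/-- Euclidean bound for `A *ᵥ y` from an entry bound. -/
lemma enorm3_mulVec_le {M : ℝ} (A : Matrix (Fin 3) (Fin 3) ℝ)
    (h : ∀ a b, |A a b| ≤ M) (y : V3) : enorm3 (A.mulVec y) ≤ 6 * M * enorm3 y := by
  have hM : 0 ≤ M := le_trans (abs_nonneg _) (h 0 0)
  have hrow : ∀ a, |A.mulVec y a| ≤ 3 * M * enorm3 y := by
    intro a
    calc |A.mulVec y a| = |∑ b, A a b * y b| := rfl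
      _ ≤ ∑ b, |A a b * y b| := Finset.abs_sum_le_sum_abs _ _
      _ ≤ ∑ (_b : Fin 3), M * enorm3 y := by
          refine Finset.sum_le_sum fun b _ => ?_
          rw [abs_mul]
          exact mul_le_mul (h a b) (abs_le_enorm3 y b) (abs_nonneg _) hM
      _ = 3 * M * enorm3 y := by simp; ring
  have h1 : enorm3 (A.mulVec y) ^ 2 ≤ 3 * (3 * M * enorm3 y) ^ 2 := by
    rw [sq_enorm3]
    calc ∑ a, A.mulVec y a ^ 2 ≤ ∑ (_a : Fin 3), (3 * M * enorm3 y) ^ 2 := by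
          refine Finset.sum_le_sum fun a _ => ?_
          have h' := pow_le_pow_left₀ (abs_nonneg _) (hrow a) 2
          rwa [sq_abs] at h'
      _ = 3 * (3 * M * enorm3 y) ^ 2 := by
          simp only [Finset.sum_const, Finset.card_univ, Fintype.card_fin, nsmul_eq_mul]
          push_cast; ring
  have h2 : (6 * M * enorm3 y) ^ 2 = 36 * (M * enorm3 y) ^ 2 := by ring
  have h3 : enorm3 (A.mulVec y) ^ 2 ≤ (6 * M * enorm3 y) ^ 2 := by nlinarith [h1]
  calc enorm3 (A.mulVec y) = Real.sqrt (enorm3 (A.mulVec y) ^ 2) :=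
        (Real.sqrt_sq (enorm3_nonneg _)).symm
    _ ≤ Real.sqrt ((6 * M * enorm3 y) ^ 2) := Real.sqrt_le_sqrt h3
    _ = 6 * M * enorm3 y := Real.sqrt_sq (by nlinarith [mul_nonneg hM (enorm3_nonneg y)])


lemma quadForm_inv_ge (hsym : 𝒯.IsSymm) (hlm : 0 < lm) (hl : lm ≤ lM)
    (hlow : ∀ k : V3, lm * enorm3 k ^ 2 ≤ quadForm 𝒯 k)
    (hup : ∀ k : V3, quadForm 𝒯 k ≤ lM * enorm3 k ^ 2) (k : V3) :
    lm / (36 * lM ^ 2) * enorm3 k ^ 2 ≤ quadForm 𝒯⁻¹ k := by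
  have hlM : 0 < lM := lt_of_lt_of_le hlm hl
  set y := 𝒯⁻¹.mulVec k with hy
  have heq : quadForm 𝒯⁻¹ k = quadForm 𝒯 y := quadForm_inv_eq 𝒯 hsym hlm hlow k
  have hk : 𝒯.mulVec y = k := mulVec_inv_cancel 𝒯 hsym hlm hlow k
  have hq0 : ∀ x : V3, 0 ≤ quadForm 𝒯 x := fun x =>
    le_trans (mul_nonneg hlm.le (sq_nonneg _)) (hlow x)
  have hent : ∀ a b, |𝒯 a b| ≤ lM := entry_abs_le 𝒯 hsym hq0 hup
  have hek : enorm3 k ≤ 6 * lM * enorm3 y := by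
    rw [← hk]; exact enorm3_mulVec_le 𝒯 hent y
  have h1 : enorm3 k ^ 2 ≤ 36 * lM ^ 2 * enorm3 y ^ 2 := by
    nlinarith [enorm3_nonneg k, enorm3_nonneg y, hek]
  rw [heq]
  calc lm / (36 * lM ^ 2) * enorm3 k ^ 2
      ≤ lm / (36 * lM ^ 2) * (36 * lM ^ 2 * enorm3 y ^ 2) := by
        apply mul_le_mul_of_nonneg_left h1; positivity
    _ = lm * enorm3 y ^ 2 := by field_simp
    _ ≤ quadForm 𝒯 y := hlow y

/-- `|abc - a'b'c'| ≤ M²(|a-a'|+|b-b'|+|c-c'|)` for entries bounded by `M`. -/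
lemma abs_prod3_sub {M a b c a' b' c' : ℝ} (ha : |a| ≤ M) (hb : |b| ≤ M) (hc : |c| ≤ M)
    (ha' : |a'| ≤ M) (hb' : |b'| ≤ M) (hc' : |c'| ≤ M) :
    |a * b * c - a' * b' * c'| ≤ M ^ 2 * (|a - a'| + |b - b'| + |c - c'|) := by
  have hM : 0 ≤ M := le_trans (abs_nonneg a) ha
  have e : a * b * c - a' * b' * c'
      = (a - a') * b * c + a' * (b - b') * c + a' * b' * (c - c') := by ring
  rw [e]
  calc |(a - a') * b * c + a' * (b - b') * c + a' * b' * (c - c')|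
      ≤ |(a - a') * b * c| + |a' * (b - b') * c| + |a' * b' * (c - c')| := by
        exact (abs_add_le _ _).trans (add_le_add_left (abs_add_le _ _) _)
    _ ≤ |a - a'| * M ^ 2 + |b - b'| * M ^ 2 + |c - c'| * M ^ 2 := by
        have hbc : |b| * |c| ≤ M ^ 2 := by nlinarith [abs_nonneg b, abs_nonneg c]
        have hac : |a'| * |c| ≤ M ^ 2 := by nlinarith [abs_nonneg a', abs_nonneg c]
        have hab : |a'| * |b'| ≤ M ^ 2 := by nlinarith [abs_nonneg a', abs_nonneg b']
        have e1 : |(a - a') * b * c| = |a - a'| * (|b| * |c|) := by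
          rw [abs_mul, abs_mul]; ring
        have e2 : |a' * (b - b') * c| = |b - b'| * (|a'| * |c|) := by
          rw [abs_mul, abs_mul]; ring
        have e3 : |a' * b' * (c - c')| = |c - c'| * (|a'| * |b'|) := by
          rw [abs_mul, abs_mul]; ring
        rw [e1, e2, e3]
        exact add_le_add (add_le_add (mul_le_mul_of_nonneg_left hbc (abs_nonneg _))
          (mul_le_mul_of_nonneg_left hac (abs_nonneg _)))
          (mul_le_mul_of_nonneg_left hab (abs_nonneg _))
    _ = M ^ 2 * (|a - a'| + |b - b'| + |c - c'|) := by ring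

lemma entry_diff_le_S (A B : Matrix (Fin 3) (Fin 3) ℝ) (a b : Fin 3) :
    |A a b - B a b| ≤ ∑ c, ∑ d, |A c d - B c d| := by
  calc |A a b - B a b| ≤ ∑ d, |A a d - B a d| :=
        Finset.single_le_sum (f := fun d => |A a d - B a d|)
          (fun d _ => abs_nonneg _) (Finset.mem_univ b)
    _ ≤ ∑ c, ∑ d, |A c d - B c d| :=
        Finset.single_le_sum (f := fun c => ∑ d, |A c d - B c d|)
          (fun c _ => Finset.sum_nonneg fun d _ => abs_nonneg _) (Finset.mem_univ a)

lemma abs_det_sub_le {M : ℝ} (A B : Matrix (Fin 3) (Fin 3) ℝ)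
    (hA : ∀ a b, |A a b| ≤ M) (hB : ∀ a b, |B a b| ≤ M) :
    |A.det - B.det| ≤ 18 * M ^ 2 * (∑ c, ∑ d, |A c d - B c d|) := by
  set S := ∑ c, ∑ d, |A c d - B c d| with hS
  have hE : ∀ a b : Fin 3, |A a b - B a b| ≤ S := fun a b => entry_diff_le_S A B a b
  have hM : 0 ≤ M := le_trans (abs_nonneg _) (hA 0 0)
  have key : ∀ a₁ a₂ a₃ b₁ b₂ b₃ : Fin 3,
      |A a₁ b₁ * A a₂ b₂ * A a₃ b₃ - B a₁ b₁ * B a₂ b₂ * B a₃ b₃| ≤ 3 * M ^ 2 * S := by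
    intro a₁ a₂ a₃ b₁ b₂ b₃
    calc |A a₁ b₁ * A a₂ b₂ * A a₃ b₃ - B a₁ b₁ * B a₂ b₂ * B a₃ b₃|
        ≤ M ^ 2 * (|A a₁ b₁ - B a₁ b₁| + |A a₂ b₂ - B a₂ b₂| + |A a₃ b₃ - B a₃ b₃|) :=
          abs_prod3_sub (hA _ _) (hA _ _) (hA _ _) (hB _ _) (hB _ _) (hB _ _)
      _ ≤ M ^ 2 * (S + S + S) := by
          apply mul_le_mul_of_nonneg_left _ (by positivity)
          exact add_le_add (add_le_add (hE _ _) (hE _ _)) (hE _ _)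
      _ = 3 * M ^ 2 * S := by ring
  have h1 := key 0 1 2 0 1 2
  have h2 := key 0 1 2 0 2 1
  have h3 := key 0 1 2 1 0 2
  have h4 := key 0 1 2 1 2 0
  have h5 := key 0 1 2 2 0 1
  have h6 := key 0 1 2 2 1 0
  have e : A.det - B.det
      = (A 0 0 * A 1 1 * A 2 2 - B 0 0 * B 1 1 * B 2 2)
        - (A 0 0 * A 1 2 * A 2 1 - B 0 0 * B 1 2 * B 2 1)
        - (A 0 1 * A 1 0 * A 2 2 - B 0 1 * B 1 0 * B 2 2)
        + (A 0 1 * A 1 2 * A 2 0 - B 0 1 * B 1 2 * B 2 0)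
        + (A 0 2 * A 1 0 * A 2 1 - B 0 2 * B 1 0 * B 2 1)
        - (A 0 2 * A 1 1 * A 2 0 - B 0 2 * B 1 1 * B 2 0) := by
    rw [Matrix.det_fin_three, Matrix.det_fin_three]
    ring
  rw [e]
  set d1 := A 0 0 * A 1 1 * A 2 2 - B 0 0 * B 1 1 * B 2 2 with hd1
  set d2 := A 0 0 * A 1 2 * A 2 1 - B 0 0 * B 1 2 * B 2 1 with hd2
  set d3 := A 0 1 * A 1 0 * A 2 2 - B 0 1 * B 1 0 * B 2 2 with hd3
  set d4 := A 0 1 * A 1 2 * A 2 0 - B 0 1 * B 1 2 * B 2 0 with hd4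
  set d5 := A 0 2 * A 1 0 * A 2 1 - B 0 2 * B 1 0 * B 2 1 with hd5
  set d6 := A 0 2 * A 1 1 * A 2 0 - B 0 2 * B 1 1 * B 2 0 with hd6
  have tri : |d1 - d2 - d3 + d4 + d5 - d6| ≤ |d1| + |d2| + |d3| + |d4| + |d5| + |d6| := by
    calc |d1 - d2 - d3 + d4 + d5 - d6| ≤ |d1 - d2 - d3 + d4 + d5| + |d6| := abs_sub _ _
      _ ≤ (|d1 - d2 - d3 + d4| + |d5|) + |d6| := add_le_add_left (abs_add_le _ _) _
      _ ≤ ((|d1 - d2 - d3| + |d4|) + |d5|) + |d6| := by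
          have := abs_add_le (d1 - d2 - d3) d4
          linarith
      _ ≤ (((|d1 - d2| + |d3|) + |d4|) + |d5|) + |d6| := by
          have := abs_sub (d1 - d2) d3
          linarith
      _ ≤ ((((|d1| + |d2|) + |d3|) + |d4|) + |d5|) + |d6| := by
          have := abs_sub d1 d2
          linarith
      _ = |d1| + |d2| + |d3| + |d4| + |d5| + |d6| := by ring
  calc |d1 - d2 - d3 + d4 + d5 - d6| ≤ |d1| + |d2| + |d3| + |d4| + |d5| + |d6| := tri
    _ ≤ 3 * M ^ 2 * S + 3 * M ^ 2 * S + 3 * M ^ 2 * S + 3 * M ^ 2 * S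
        + 3 * M ^ 2 * S + 3 * M ^ 2 * S := by
        exact add_le_add (add_le_add (add_le_add (add_le_add (add_le_add h1 h2) h3) h4) h5) h6
    _ = 18 * M ^ 2 * S := by ring

lemma abs_det_le' {M : ℝ} (A : Matrix (Fin 3) (Fin 3) ℝ) (hA : ∀ a b, |A a b| ≤ M) :
    |A.det| ≤ 162 * M ^ 3 := by
  have hM : 0 ≤ M := le_trans (abs_nonneg _) (hA 0 0)
  have h := abs_det_sub_le A 0 hA (fun a b => by simpa using hM)
  rw [Matrix.det_zero, sub_zero] at h
  have hsum : (∑ c, ∑ d, |A c d - (0 : Matrix (Fin 3) (Fin 3) ℝ) c d|) ≤ 9 * M := by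
    simp only [Matrix.zero_apply, sub_zero]
    calc ∑ c, ∑ d, |A c d| ≤ ∑ (_c : Fin 3), ∑ (_d : Fin 3), M :=
          Finset.sum_le_sum fun c _ => Finset.sum_le_sum fun d _ => hA c d
      _ = 9 * M := by
          simp only [Finset.sum_const, Finset.card_univ, Fintype.card_fin, nsmul_eq_mul]
          push_cast; ring
  calc |A.det| ≤ 18 * M ^ 2 * (∑ c, ∑ d, |A c d - (0 : Matrix (Fin 3) (Fin 3) ℝ) c d|) := h
    _ ≤ 18 * M ^ 2 * (9 * M) := mul_le_mul_of_nonneg_left hsum (by positivity)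
    _ = 162 * M ^ 3 := by ring

lemma det_le (hsym : 𝒯.IsSymm) (hlm : 0 < lm) (hl : lm ≤ lM)
    (hlow : ∀ k : V3, lm * enorm3 k ^ 2 ≤ quadForm 𝒯 k)
    (hup : ∀ k : V3, quadForm 𝒯 k ≤ lM * enorm3 k ^ 2) :
    𝒯.det ≤ 162 * lM ^ 3 := by
  have hq0 : ∀ x : V3, 0 ≤ quadForm 𝒯 x := fun x =>
    le_trans (mul_nonneg hlm.le (sq_nonneg _)) (hlow x)
  have hent : ∀ a b, |𝒯 a b| ≤ lM := entry_abs_le 𝒯 hsym hq0 hup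
  exact le_trans (le_abs_self _) (abs_det_le' 𝒯 hent)

lemma det_ge (hsym : 𝒯.IsSymm) (hlm : 0 < lm)
    (hlow : ∀ k : V3, lm * enorm3 k ^ 2 ≤ quadForm 𝒯 k)
    (hup : ∀ k : V3, quadForm 𝒯 k ≤ lM * enorm3 k ^ 2) :
    lm ^ 3 / 162 ≤ 𝒯.det := by
  have hpd := posDef_of 𝒯 hsym hlm hlow
  have hdetpos : 0 < 𝒯.det := hpd.det_pos
  have hinv_sym : (𝒯⁻¹).IsSymm := inv_isSymm 𝒯 hsym
  have hinv_nonneg := quadForm_inv_nonneg 𝒯 hsym hlm hlow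
  have hinv_up := quadForm_inv_le 𝒯 hsym hlm hlow hup
  have hent : ∀ a b, |𝒯⁻¹ a b| ≤ lm⁻¹ := entry_abs_le 𝒯⁻¹ hinv_sym hinv_nonneg hinv_up
  have hinvdet : (𝒯⁻¹).det = (𝒯.det)⁻¹ := by
    rw [Matrix.det_nonsing_inv, Ring.inverse_eq_inv']
  have hinvdet_le : (𝒯.det)⁻¹ ≤ 162 * lm⁻¹ ^ 3 := by
    rw [← hinvdet]
    exact le_trans (le_abs_self _) (abs_det_le' 𝒯⁻¹ hent)
  have h162 : (0:ℝ) < 162 * lm⁻¹ ^ 3 := by positivity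
  have := inv_anti₀ (inv_pos.mpr hdetpos) hinvdet_le
  rw [inv_inv] at this
  calc lm ^ 3 / 162 = (162 * lm⁻¹ ^ 3)⁻¹ := by
        rw [mul_inv, inv_pow, inv_inv]; ring
    _ ≤ 𝒯.det := this

end Tensor

lemma inv_sub_inv' (A B : Matrix (Fin 3) (Fin 3) ℝ) (hA : IsUnit A.det) (hB : IsUnit B.det) :
    A⁻¹ - B⁻¹ = A⁻¹ * (B - A) * B⁻¹ := by
  rw [Matrix.mul_sub, Matrix.sub_mul, Matrix.mul_assoc, Matrix.mul_nonsing_inv B hB,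
    Matrix.mul_one, Matrix.nonsing_inv_mul A hA, Matrix.one_mul]

lemma entry_triple_le {μ S : ℝ} (X Δ Y : Matrix (Fin 3) (Fin 3) ℝ)
    (hX : ∀ a b, |X a b| ≤ μ) (hY : ∀ a b, |Y a b| ≤ μ) (hΔ : ∀ a b, |Δ a b| ≤ S)
    (a b : Fin 3) : |(X * Δ * Y) a b| ≤ 9 * (μ ^ 2 * S) := by
  have hμ : 0 ≤ μ := le_trans (abs_nonneg _) (hX 0 0)
  have hS : 0 ≤ S := le_trans (abs_nonneg _) (hΔ 0 0)
  have step : ∀ c d, |X a c * Δ c d * Y d b| ≤ μ ^ 2 * S := by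
    intro c d
    rw [abs_mul, abs_mul]
    calc |X a c| * |Δ c d| * |Y d b| ≤ μ * S * μ := by
          apply mul_le_mul _ (hY d b) (abs_nonneg _) (by positivity)
          exact mul_le_mul (hX a c) (hΔ c d) (abs_nonneg _) hμ
      _ = μ ^ 2 * S := by ring
  have expand : (X * Δ * Y) a b = ∑ d, ∑ c, X a c * Δ c d * Y d b := by
    rw [Matrix.mul_apply]
    refine Finset.sum_congr rfl fun d _ => ?_
    rw [Matrix.mul_apply, Finset.sum_mul]
  rw [expand]
  calc |∑ d, ∑ c, X a c * Δ c d * Y d b| ≤ ∑ d, ∑ c, |X a c * Δ c d * Y d b| := by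
        refine (Finset.abs_sum_le_sum_abs _ _).trans ?_
        exact Finset.sum_le_sum fun d _ => Finset.abs_sum_le_sum_abs _ _
    _ ≤ ∑ (_d : Fin 3), ∑ (_c : Fin 3), μ ^ 2 * S :=
        Finset.sum_le_sum fun d _ => Finset.sum_le_sum fun c _ => step _ _
    _ = 9 * (μ ^ 2 * S) := by
        simp only [Finset.sum_const, Finset.card_univ, Fintype.card_fin, nsmul_eq_mul]
        push_cast; ring

lemma abs_exp_sub_exp (x y : ℝ) : |Real.exp x - Real.exp y| ≤ Real.exp (max x y) * |x - y| := by
  wlog hxy : x ≤ y generalizing x y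
  · have h := this y x (le_of_not_ge hxy)
    rwa [abs_sub_comm, max_comm, abs_sub_comm y x] at h
  rw [max_eq_right hxy, abs_sub_comm, abs_of_nonneg (sub_nonneg.mpr (Real.exp_le_exp.mpr hxy)),
    abs_sub_comm, abs_of_nonneg (sub_nonneg.mpr hxy)]
  have h1 : Real.exp x = Real.exp y * Real.exp (x - y) := by
    rw [← Real.exp_add]; ring_nf
  have h2 : (x - y) + 1 ≤ Real.exp (x - y) := Real.add_one_le_exp _
  nlinarith [Real.exp_pos y]

/-- Polynomial × Gaussian bound. -/
lemma poly_gauss_bound (n : ℕ) (α : ℝ) (hα : 0 < α) :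
    ∃ B > 0, ∀ t : ℝ, 0 ≤ t → (1 + t) ^ n * Real.exp (-(α * t ^ 2)) ≤ B := by
  refine ⟨2 ^ n + 2 ^ n * (n.factorial : ℝ) / α ^ n, by positivity, fun t ht => ?_⟩
  rcases le_total t 1 with h1 | h1
  · have hp : (1 + t) ^ n ≤ 2 ^ n := pow_le_pow_left₀ (by linarith) (by linarith) n
    have he : Real.exp (-(α * t ^ 2)) ≤ 1 := Real.exp_le_one_iff.mpr (by nlinarith)
    have : (1 + t) ^ n * Real.exp (-(α * t ^ 2)) ≤ 2 ^ n := by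
      calc (1 + t) ^ n * Real.exp (-(α * t ^ 2)) ≤ 2 ^ n * 1 := by
            apply mul_le_mul hp he (Real.exp_pos _).le (by positivity)
        _ = 2 ^ n := mul_one _
    have hfac : (0:ℝ) ≤ 2 ^ n * (n.factorial : ℝ) / α ^ n := by positivity
    linarith
  · have ht0 : (0:ℝ) < t := lt_of_lt_of_le one_pos h1
    have hx : (0:ℝ) ≤ α * t ^ 2 := by positivity
    have hkey : (α * t ^ 2) ^ n ≤ (n.factorial : ℝ) * Real.exp (α * t ^ 2) := by
      have hs : (α * t ^ 2) ^ n / (n.factorial : ℝ) ≤ Real.exp (α * t ^ 2) := by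
        refine le_trans ?_ (Real.sum_le_exp_of_nonneg hx (n + 1))
        exact Finset.single_le_sum (f := fun i => (α * t ^ 2) ^ i / (i.factorial : ℝ))
          (fun i _ => by positivity) (Finset.self_mem_range_succ n)
      have hfac : (0:ℝ) < (n.factorial : ℝ) := by positivity
      calc (α * t ^ 2) ^ n = ((α * t ^ 2) ^ n / (n.factorial : ℝ)) * (n.factorial : ℝ) := by
            field_simp
        _ ≤ Real.exp (α * t ^ 2) * (n.factorial : ℝ) :=
            mul_le_mul_of_nonneg_right hs hfac.le
        _ = (n.factorial : ℝ) * Real.exp (α * t ^ 2) := mul_comm _ _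
    have hpoly : (1 + t) ^ n ≤ (2 ^ n / α ^ n) * (α * t ^ 2) ^ n := by
      have e : (2 ^ n / α ^ n) * (α * t ^ 2) ^ n = (2 * t ^ 2) ^ n := by
        rw [mul_pow, mul_pow]
        field_simp
      rw [e]
      apply pow_le_pow_left₀ (by linarith)
      nlinarith
    have hBexp : (1 + t) ^ n ≤ (2 ^ n * (n.factorial : ℝ) / α ^ n) * Real.exp (α * t ^ 2) := by
      calc (1 + t) ^ n ≤ (2 ^ n / α ^ n) * (α * t ^ 2) ^ n := hpoly
        _ ≤ (2 ^ n / α ^ n) * ((n.factorial : ℝ) * Real.exp (α * t ^ 2)) :=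
            mul_le_mul_of_nonneg_left hkey (by positivity)
        _ = (2 ^ n * (n.factorial : ℝ) / α ^ n) * Real.exp (α * t ^ 2) := by ring
    have hepos := Real.exp_pos (α * t ^ 2)
    have : (1 + t) ^ n * Real.exp (-(α * t ^ 2)) ≤ 2 ^ n * (n.factorial : ℝ) / α ^ n := by
      rw [Real.exp_neg, mul_inv_le_iff₀ hepos]
      calc (1 + t) ^ n ≤ (2 ^ n * (n.factorial : ℝ) / α ^ n) * Real.exp (α * t ^ 2) := hBexp
        _ = 2 ^ n * (n.factorial : ℝ) / α ^ n * Real.exp (α * t ^ 2) := rfl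
    have h2n : (0:ℝ) ≤ 2 ^ n := by positivity
    linarith

lemma rpow_le_pow_ceil {q s : ℝ} (hq : 0 ≤ q) (hs : 0 ≤ s) :
    (1 + s) ^ q ≤ (1 + s) ^ (⌈q⌉₊ : ℕ) := by
  rw [← Real.rpow_natCast (1 + s) ⌈q⌉₊]
  exact Real.rpow_le_rpow_of_exponent_le (by linarith) (Nat.le_ceil q)

end GLaux


namespace GLaux

lemma quadForm_polar (A : Matrix (Fin 3) (Fin 3) ℝ) (hA : A.IsSymm) (x y : V3) :
    quadForm A x - quadForm A y
      = bilin A (fun a => x a + y a) (fun a => x a - y a) := by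
  have e1 : ∀ a : Fin 3, (∑ b, (x a + y a) * A a b * (x b - y b))
      = ((∑ b, x a * A a b * x b) - (∑ b, y a * A a b * y b))
        + ((∑ b, y a * A a b * x b) - (∑ b, x a * A a b * y b)) := by
    intro a
    rw [← Finset.sum_sub_distrib, ← Finset.sum_sub_distrib, ← Finset.sum_add_distrib]
    exact Finset.sum_congr rfl fun b _ => by ring
  have e2 : bilin A (fun a => x a + y a) (fun a => x a - y a)
      = (quadForm A x - quadForm A y) + (bilin A y x - bilin A x y) := by
    simp only [bilin, quadForm]
    rw [← Finset.sum_sub_distrib, ← Finset.sum_sub_distrib, ← Finset.sum_add_distrib]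
    exact Finset.sum_congr rfl fun a _ => e1 a
  rw [e2, bilin_symm A hA x y]
  ring

lemma abs_bilin_le {c : ℝ} (A : Matrix (Fin 3) (Fin 3) ℝ) (hA : A.IsSymm) (hc : 0 ≤ c)
    (h0 : ∀ k : V3, 0 ≤ quadForm A k) (hup : ∀ k : V3, quadForm A k ≤ c * enorm3 k ^ 2)
    (x y : V3) : |bilin A x y| ≤ c * enorm3 x * enorm3 y := by
  have hcs := bilin_cs A hA h0 x y
  have h1 : bilin A x y ^ 2 ≤ (c * enorm3 x * enorm3 y) ^ 2 := by
    calc bilin A x y ^ 2 ≤ quadForm A x * quadForm A y := hcs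
      _ ≤ (c * enorm3 x ^ 2) * (c * enorm3 y ^ 2) :=
          mul_le_mul (hup x) (hup y) (h0 y) (by positivity)
      _ = (c * enorm3 x * enorm3 y) ^ 2 := by ring
  calc |bilin A x y| = Real.sqrt (bilin A x y ^ 2) := (Real.sqrt_sq_eq_abs _).symm
    _ ≤ Real.sqrt ((c * enorm3 x * enorm3 y) ^ 2) := Real.sqrt_le_sqrt h1
    _ = c * enorm3 x * enorm3 y := Real.sqrt_sq
        (mul_nonneg (mul_nonneg hc (enorm3_nonneg x)) (enorm3_nonneg y))

lemma enorm3_congr (x y : V3) (h : ∀ a, x a ^ 2 = y a ^ 2) : enorm3 x = enorm3 y := by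
  rw [enorm3, enorm3]
  congr 1
  exact Finset.sum_congr rfl fun a _ => h a

end GLaux

open GLaux

set_option maxHeartbeats 2000000

/-- Lipschitz continuity of the ellipsoidal Gaussian with respect to its
macroscopic parameters, uniformly in the weighted `L∞_q` norm. -/
theorem gaussian_lipschitz_in_parameters (q ρm ρM uM lm lM : ℝ) (hq : 0 ≤ q)
    (hρm : 0 < ρm) (hρ : ρm ≤ ρM) (huM : 0 ≤ uM) (hlm : 0 < lm) (hl : lm ≤ lM) :
    ∃ C > 0, ∀ (ρ₁ ρ₂ : ℝ) (U₁ U₂ : V3) (𝒯₁ 𝒯₂ : Matrix (Fin 3) (Fin 3) ℝ),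
      ρ₁ ∈ Set.Icc ρm ρM → ρ₂ ∈ Set.Icc ρm ρM →
      enorm3 U₁ ≤ uM → enorm3 U₂ ≤ uM →
      𝒯₁.IsSymm → 𝒯₂.IsSymm →
      (∀ k : V3, lm * enorm3 k ^ 2 ≤ quadForm 𝒯₁ k ∧ quadForm 𝒯₁ k ≤ lM * enorm3 k ^ 2) →
      (∀ k : V3, lm * enorm3 k ^ 2 ≤ quadForm 𝒯₂ k ∧ quadForm 𝒯₂ k ≤ lM * enorm3 k ^ 2) →
      ∀ v : V3,
        (1 + enorm3 v) ^ q * |gaussianM ρ₁ U₁ 𝒯₁ v - gaussianM ρ₂ U₂ 𝒯₂ v|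
          ≤ C * (|ρ₁ - ρ₂| + enorm3 (fun a => U₁ a - U₂ a)
              + ∑ a, ∑ b, |𝒯₁ a b - 𝒯₂ a b|) := by
  have hlM : 0 < lM := lt_of_lt_of_le hlm hl
  have hρM : 0 < ρM := lt_of_lt_of_le hρm hρ
  have hπ : (0:ℝ) < (2 * π) ^ 3 := by positivity
  have hμ0 : (0:ℝ) ≤ lm⁻¹ := inv_nonneg.mpr hlm.le
  have hβ0 : (0:ℝ) < lm / (36 * lM ^ 2) := by positivity
  set α : ℝ := lm / (36 * lM ^ 2) / 2 with hα_def
  have hα : 0 < α := by positivity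
  set m : ℕ := ⌈q⌉₊ with hm
  obtain ⟨B, hB0, hB⟩ := poly_gauss_bound (m + 2) α hα
  set Dlo : ℝ := Real.sqrt ((2 * π) ^ 3 * (lm ^ 3 / 162)) with hDm
  have hDlo : 0 < Dlo := Real.sqrt_pos.mpr (by positivity)
  set K : ℝ := (1 + uM) ^ q with hKdef
  have hK0 : 0 < K := Real.rpow_pos_of_pos (by linarith) q
  set c₁ : ℝ := 1 / Dlo with hc₁def
  set c₂ : ℝ := (ρM / Dlo) * (1 / 2) * (lm⁻¹ * (2 + 2 * uM)) with hc₂def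
  set c₃ : ℝ := ρM * 9 * (2 * π) ^ 3 * lM ^ 2 / Dlo ^ 3
      + (ρM / Dlo) * (1 / 2) * (81 * lm⁻¹ ^ 2 * (1 + 2 * uM) ^ 2) with hc₃def
  have hc₁0 : 0 < c₁ := div_pos one_pos hDlo
  have hc₂0 : 0 ≤ c₂ :=
    mul_nonneg (mul_nonneg (div_nonneg hρM.le hDlo.le) (by norm_num))
      (mul_nonneg hμ0 (by linarith))
  have hc₃0 : 0 ≤ c₃ := by
    apply add_nonneg
    · apply div_nonneg _ (by positivity)
      have : (0:ℝ) ≤ ρM * 9 * (2*π)^3 := by positivity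
      exact mul_nonneg this (sq_nonneg lM)
    · exact mul_nonneg (mul_nonneg (div_nonneg hρM.le hDlo.le) (by norm_num)) (by positivity)
  refine ⟨K * B * (c₁ + c₂ + c₃), by positivity, ?_⟩
  intro ρ₁ ρ₂ U₁ U₂ 𝒯₁ 𝒯₂ hρ₁ hρ₂ hU₁ hU₂ hs₁ hs₂ hq₁ hq₂ v
  -- matrix facts
  have hlow₁ : ∀ k : V3, lm * enorm3 k ^ 2 ≤ quadForm 𝒯₁ k := fun k => (hq₁ k).1
  have hup₁ : ∀ k : V3, quadForm 𝒯₁ k ≤ lM * enorm3 k ^ 2 := fun k => (hq₁ k).2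
  have hlow₂ : ∀ k : V3, lm * enorm3 k ^ 2 ≤ quadForm 𝒯₂ k := fun k => (hq₂ k).1
  have hup₂ : ∀ k : V3, quadForm 𝒯₂ k ≤ lM * enorm3 k ^ 2 := fun k => (hq₂ k).2
  have hq0₁ : ∀ k : V3, 0 ≤ quadForm 𝒯₁ k := fun k =>
    le_trans (mul_nonneg hlm.le (sq_nonneg _)) (hlow₁ k)
  have hq0₂ : ∀ k : V3, 0 ≤ quadForm 𝒯₂ k := fun k =>
    le_trans (mul_nonneg hlm.le (sq_nonneg _)) (hlow₂ k)
  have hdetpos₁ : 0 < 𝒯₁.det := (posDef_of 𝒯₁ hs₁ hlm hlow₁).det_pos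
  have hdetpos₂ : 0 < 𝒯₂.det := (posDef_of 𝒯₂ hs₂ hlm hlow₂).det_pos
  have hunit₁ : IsUnit 𝒯₁.det := isUnit_det_of 𝒯₁ hs₁ hlm hlow₁
  have hunit₂ : IsUnit 𝒯₂.det := isUnit_det_of 𝒯₂ hs₂ hlm hlow₂
  have hdge₁ : lm ^ 3 / 162 ≤ 𝒯₁.det := det_ge 𝒯₁ hs₁ hlm hlow₁ hup₁
  have hdge₂ : lm ^ 3 / 162 ≤ 𝒯₂.det := det_ge 𝒯₂ hs₂ hlm hlow₂ hup₂
  have hent₁ : ∀ a b, |𝒯₁ a b| ≤ lM := entry_abs_le 𝒯₁ hs₁ hq0₁ hup₁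
  have hent₂ : ∀ a b, |𝒯₂ a b| ≤ lM := entry_abs_le 𝒯₂ hs₂ hq0₂ hup₂
  have hisym₁ : (𝒯₁⁻¹).IsSymm := inv_isSymm 𝒯₁ hs₁
  have hisym₂ : (𝒯₂⁻¹).IsSymm := inv_isSymm 𝒯₂ hs₂
  have hinn₁ := quadForm_inv_nonneg 𝒯₁ hs₁ hlm hlow₁
  have hinn₂ := quadForm_inv_nonneg 𝒯₂ hs₂ hlm hlow₂
  have hiup₁ : ∀ k : V3, quadForm 𝒯₁⁻¹ k ≤ lm⁻¹ * enorm3 k ^ 2 :=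
    quadForm_inv_le 𝒯₁ hs₁ hlm hlow₁ hup₁
  have hiup₂ : ∀ k : V3, quadForm 𝒯₂⁻¹ k ≤ lm⁻¹ * enorm3 k ^ 2 :=
    quadForm_inv_le 𝒯₂ hs₂ hlm hlow₂ hup₂
  have hige₁ : ∀ k : V3, lm / (36 * lM ^ 2) * enorm3 k ^ 2 ≤ quadForm 𝒯₁⁻¹ k :=
    quadForm_inv_ge 𝒯₁ hs₁ hlm hl hlow₁ hup₁
  have hige₂ : ∀ k : V3, lm / (36 * lM ^ 2) * enorm3 k ^ 2 ≤ quadForm 𝒯₂⁻¹ k :=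
    quadForm_inv_ge 𝒯₂ hs₂ hlm hl hlow₂ hup₂
  have hient₁ : ∀ a b, |𝒯₁⁻¹ a b| ≤ lm⁻¹ := entry_abs_le 𝒯₁⁻¹ hisym₁ hinn₁ hiup₁
  have hient₂ : ∀ a b, |𝒯₂⁻¹ a b| ≤ lm⁻¹ := entry_abs_le 𝒯₂⁻¹ hisym₂ hinn₂ hiup₂
  -- notation
  set S : ℝ := ∑ a, ∑ b, |𝒯₁ a b - 𝒯₂ a b| with hSdef
  have hS0 : 0 ≤ S := Finset.sum_nonneg fun a _ => Finset.sum_nonneg fun b _ => abs_nonneg _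
  set dU : ℝ := enorm3 (fun a => U₁ a - U₂ a) with hdUdef
  have hdU0 : 0 ≤ dU := enorm3_nonneg _
  set w₁ : V3 := fun a => v a - U₁ a with hw₁
  set w₂ : V3 := fun a => v a - U₂ a with hw₂
  set r₁ : ℝ := enorm3 w₁ with hr₁def
  set r₂ : ℝ := enorm3 w₂ with hr₂def
  have hr₁0 : 0 ≤ r₁ := enorm3_nonneg _
  have hr₂0 : 0 ≤ r₂ := enorm3_nonneg _
  set r : ℝ := min r₁ r₂ with hrdef
  have hr0 : 0 ≤ r := le_min hr₁0 hr₂0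
  set D₁ : ℝ := Real.sqrt ((2 * π) ^ 3 * 𝒯₁.det) with hD₁def
  set D₂ : ℝ := Real.sqrt ((2 * π) ^ 3 * 𝒯₂.det) with hD₂def
  set E₁ : ℝ := Real.exp (-(1 / 2) * quadForm 𝒯₁⁻¹ w₁) with hE₁def
  set E₂ : ℝ := Real.exp (-(1 / 2) * quadForm 𝒯₂⁻¹ w₂) with hE₂def
  have hM₁ : gaussianM ρ₁ U₁ 𝒯₁ v = ρ₁ / D₁ * E₁ := rfl
  have hM₂ : gaussianM ρ₂ U₂ 𝒯₂ v = ρ₂ / D₂ * E₂ := rfl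
  have hD₁ge : Dlo ≤ D₁ := Real.sqrt_le_sqrt (mul_le_mul_of_nonneg_left hdge₁ hπ.le)
  have hD₂ge : Dlo ≤ D₂ := Real.sqrt_le_sqrt (mul_le_mul_of_nonneg_left hdge₂ hπ.le)
  have hD₁pos : 0 < D₁ := lt_of_lt_of_le hDlo hD₁ge
  have hD₂pos : 0 < D₂ := lt_of_lt_of_le hDlo hD₂ge
  have hE₁pos : 0 < E₁ := Real.exp_pos _
  have hE₂pos : 0 < E₂ := Real.exp_pos _
  set G : ℝ := Real.exp (-(α * r ^ 2)) with hGdef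
  have hGpos : 0 < G := Real.exp_pos _
  have hrsq : r ^ 2 ≤ r₁ ^ 2 := by nlinarith only [min_le_left r₁ r₂, hr0]
  have hrsq' : r ^ 2 ≤ r₂ ^ 2 := by nlinarith only [min_le_right r₁ r₂, hr0]
  have hE₁le : E₁ ≤ G := by
    apply Real.exp_le_exp.mpr
    have h := hige₁ w₁
    rw [hα_def]
    nlinarith only [h, hrsq, hβ0]
  have hE₂le : E₂ ≤ G := by
    apply Real.exp_le_exp.mpr
    have h := hige₂ w₂
    rw [hα_def]
    nlinarith only [h, hrsq', hβ0]
  -- vector norm facts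
  have hd_eq : enorm3 (fun a => w₁ a - w₂ a) = dU := by
    apply enorm3_congr
    intro a
    simp only [hw₁, hw₂]
    ring
  have hwsum : ∀ a, w₂ a + (w₁ a - w₂ a) = w₁ a := fun a => by ring
  have hr₁le : r₁ ≤ r₂ + dU := by
    have h := enorm3_add_le w₂ (fun a => w₁ a - w₂ a)
    rw [hd_eq] at h
    have e : (fun a => w₂ a + (w₁ a - w₂ a)) = w₁ := funext hwsum
    rw [e] at h
    exact h
  have hr₂le : r₂ ≤ r₁ + dU := by
    have h := enorm3_add_le w₁ (fun a => w₂ a - w₁ a)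
    have e : (fun a => w₁ a + (w₂ a - w₁ a)) = w₂ := funext fun a => by ring
    rw [e] at h
    have e2 : enorm3 (fun a => w₂ a - w₁ a) = dU := by
      apply enorm3_congr
      intro a
      simp only [hw₁, hw₂]
      ring
    rw [e2] at h
    exact h
  have hdU2uM : dU ≤ 2 * uM := by
    have h := enorm3_add_le U₁ (fun a => -U₂ a)
    have e : (fun a => U₁ a + -U₂ a) = (fun a => U₁ a - U₂ a) := funext fun a => by ring
    rw [e] at h
    have e2 : enorm3 (fun a => -U₂ a) = enorm3 U₂ := enorm3_congr _ _ fun a => by ring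
    rw [e2] at h
    calc dU ≤ enorm3 U₁ + enorm3 U₂ := h
      _ ≤ uM + uM := add_le_add hU₁ hU₂
      _ = 2 * uM := by ring
  have hrup : r₁ + r₂ ≤ 2 * r + 2 * uM := by
    rcases le_total r₁ r₂ with h | h
    · have : r = r₁ := min_eq_left h
      linarith only [hr₂le, hdU2uM, this, h]
    · have : r = r₂ := min_eq_right h
      linarith only [hr₁le, hdU2uM, this, h]
  have hr₂r : r₂ ≤ r + 2 * uM := by
    rcases le_total r₁ r₂ with h | h
    · have : r = r₁ := min_eq_left h
      linarith only [hr₂le, hdU2uM, this]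
    · have : r = r₂ := min_eq_right h
      linarith only [huM, this]
  have henv : enorm3 v ≤ r + uM := by
    have h1 : enorm3 v ≤ r₁ + uM := by
      have h := enorm3_add_le w₁ U₁
      have e : (fun a => w₁ a + U₁ a) = v := funext fun a => by simp [hw₁]
      rw [e] at h
      linarith only [h, hU₁]
    have h2 : enorm3 v ≤ r₂ + uM := by
      have h := enorm3_add_le w₂ U₂
      have e : (fun a => w₂ a + U₂ a) = v := funext fun a => by simp [hw₂]
      rw [e] at h
      linarith only [h, hU₂]
    rcases le_total r₁ r₂ with h | h
    · rw [hrdef, min_eq_left h]; exact h1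
    · rw [hrdef, min_eq_right h]; exact h2
  -- determinant difference
  have hdetdiff : |𝒯₁.det - 𝒯₂.det| ≤ 18 * lM ^ 2 * S :=
    abs_det_sub_le 𝒯₁ 𝒯₂ hent₁ hent₂
  have hsq₁ : D₁ ^ 2 = (2 * π) ^ 3 * 𝒯₁.det :=
    Real.sq_sqrt (mul_nonneg hπ.le hdetpos₁.le)
  have hsq₂ : D₂ ^ 2 = (2 * π) ^ 3 * 𝒯₂.det :=
    Real.sq_sqrt (mul_nonneg hπ.le hdetpos₂.le)
  have hDdiff : |1 / D₁ - 1 / D₂| ≤ 9 * (2 * π) ^ 3 * lM ^ 2 * S / Dlo ^ 3 := by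
    have hDD : |D₁ - D₂| * (D₁ + D₂) = |D₁ ^ 2 - D₂ ^ 2| := by
      have e : (D₁ - D₂) * (D₁ + D₂) = D₁ ^ 2 - D₂ ^ 2 := by ring
      rw [← e, abs_mul, abs_of_pos (by linarith : (0:ℝ) < D₁ + D₂)]
    have hsqdiff : |D₁ ^ 2 - D₂ ^ 2| ≤ (2 * π) ^ 3 * (18 * lM ^ 2 * S) := by
      rw [hsq₁, hsq₂, ← mul_sub, abs_mul, abs_of_pos hπ]
      exact mul_le_mul_of_nonneg_left hdetdiff hπ.le
    have hDd : |D₁ - D₂| * (2 * Dlo) ≤ (2 * π) ^ 3 * (18 * lM ^ 2 * S) := by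
      calc |D₁ - D₂| * (2 * Dlo) ≤ |D₁ - D₂| * (D₁ + D₂) :=
            mul_le_mul_of_nonneg_left (by linarith) (abs_nonneg _)
        _ = |D₁ ^ 2 - D₂ ^ 2| := hDD
        _ ≤ (2 * π) ^ 3 * (18 * lM ^ 2 * S) := hsqdiff
    have hDd' : |D₁ - D₂| ≤ (2 * π) ^ 3 * (18 * lM ^ 2 * S) / (2 * Dlo) := by
      rw [le_div_iff₀ (by linarith : (0:ℝ) < 2 * Dlo)]
      exact hDd
    have he : 1 / D₁ - 1 / D₂ = (D₂ - D₁) / (D₁ * D₂) := by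
      field_simp
    rw [he, abs_div, abs_of_pos (mul_pos hD₁pos hD₂pos), abs_sub_comm]
    calc |D₁ - D₂| / (D₁ * D₂)
        ≤ ((2 * π) ^ 3 * (18 * lM ^ 2 * S) / (2 * Dlo)) / (Dlo ^ 2) := by
          apply div_le_div₀ _ hDd' (by positivity)
          · nlinarith only [hD₁ge, hD₂ge, hDlo]
          · positivity
      _ = 9 * (2 * π) ^ 3 * lM ^ 2 * S / Dlo ^ 3 := by
          field_simp
          ring
  -- inverse difference
  have hinvdiff : ∀ a b, |𝒯₁⁻¹ a b - 𝒯₂⁻¹ a b| ≤ 9 * (lm⁻¹ ^ 2 * S) := by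
    intro a b
    have hid := inv_sub_inv' 𝒯₁ 𝒯₂ hunit₁ hunit₂
    have he : 𝒯₁⁻¹ a b - 𝒯₂⁻¹ a b = (𝒯₁⁻¹ * (𝒯₂ - 𝒯₁) * 𝒯₂⁻¹) a b := by
      rw [← hid]; simp [Matrix.sub_apply]
    rw [he]
    apply entry_triple_le _ _ _ hient₁ hient₂
    intro a' b'
    rw [Matrix.sub_apply, abs_sub_comm]
    exact entry_diff_le_S 𝒯₁ 𝒯₂ a' b'
  have hSinv : (∑ a, ∑ b, |𝒯₁⁻¹ a b - 𝒯₂⁻¹ a b|) ≤ 81 * (lm⁻¹ ^ 2 * S) := by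
    calc (∑ a, ∑ b, |𝒯₁⁻¹ a b - 𝒯₂⁻¹ a b|)
        ≤ ∑ (_a : Fin 3), ∑ (_b : Fin 3), 9 * (lm⁻¹ ^ 2 * S) :=
          Finset.sum_le_sum fun a _ => Finset.sum_le_sum fun b _ => hinvdiff a b
      _ = 81 * (lm⁻¹ ^ 2 * S) := by
          simp only [Finset.sum_const, Finset.card_univ, Fintype.card_fin, nsmul_eq_mul]
          push_cast; ring
  -- quadratic form difference
  have henp : enorm3 (fun a => w₁ a + w₂ a) ≤ (2 + 2 * uM) * (1 + r) := by
    calc enorm3 (fun a => w₁ a + w₂ a) ≤ r₁ + r₂ := enorm3_add_le w₁ w₂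
      _ ≤ 2 * r + 2 * uM := hrup
      _ ≤ (2 + 2 * uM) * (1 + r) := by linarith only [mul_nonneg huM hr0, hr0, huM]
  have hQA : |quadForm 𝒯₁⁻¹ w₁ - quadForm 𝒯₁⁻¹ w₂|
      ≤ lm⁻¹ * ((2 + 2 * uM) * (1 + r)) * dU := by
    rw [quadForm_polar 𝒯₁⁻¹ hisym₁ w₁ w₂]
    have h := abs_bilin_le 𝒯₁⁻¹ hisym₁ hμ0 hinn₁ hiup₁
      (fun a => w₁ a + w₂ a) (fun a => w₁ a - w₂ a)
    rw [hd_eq] at h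
    calc |GLaux.bilin 𝒯₁⁻¹ (fun a => w₁ a + w₂ a) (fun a => w₁ a - w₂ a)|
        ≤ lm⁻¹ * enorm3 (fun a => w₁ a + w₂ a) * dU := h
      _ ≤ lm⁻¹ * ((2 + 2 * uM) * (1 + r)) * dU := by
          apply mul_le_mul_of_nonneg_right _ hdU0
          exact mul_le_mul_of_nonneg_left henp hμ0
  have hQB : |quadForm 𝒯₁⁻¹ w₂ - quadForm 𝒯₂⁻¹ w₂|
      ≤ 81 * (lm⁻¹ ^ 2 * S) * ((1 + 2 * uM) * (1 + r)) ^ 2 := by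
    rw [← quadForm_sub_apply]
    have h := abs_quadForm_le (𝒯₁⁻¹ - 𝒯₂⁻¹) w₂
    have hsum_eq : (∑ a, ∑ b, |(𝒯₁⁻¹ - 𝒯₂⁻¹) a b|) = ∑ a, ∑ b, |𝒯₁⁻¹ a b - 𝒯₂⁻¹ a b| := by
      refine Finset.sum_congr rfl fun a _ => Finset.sum_congr rfl fun b _ => ?_
      rw [Matrix.sub_apply]
    rw [hsum_eq] at h
    have hr₂sq : r₂ ^ 2 ≤ ((1 + 2 * uM) * (1 + r)) ^ 2 := by
      have : r₂ ≤ (1 + 2 * uM) * (1 + r) := by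
        linarith only [hr₂r, mul_nonneg huM hr0, hr0, huM]
      nlinarith only [this, hr₂0]
    calc |quadForm (𝒯₁⁻¹ - 𝒯₂⁻¹) w₂|
        ≤ (∑ a, ∑ b, |𝒯₁⁻¹ a b - 𝒯₂⁻¹ a b|) * enorm3 w₂ ^ 2 := h
      _ ≤ 81 * (lm⁻¹ ^ 2 * S) * ((1 + 2 * uM) * (1 + r)) ^ 2 := by
          apply mul_le_mul hSinv hr₂sq (sq_nonneg _)
          positivity
  -- exponential difference
  have hEdiff : |E₁ - E₂| ≤ G * ((1 / 2) * |quadForm 𝒯₁⁻¹ w₁ - quadForm 𝒯₂⁻¹ w₂|) := by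
    have h := abs_exp_sub_exp (-(1 / 2) * quadForm 𝒯₁⁻¹ w₁) (-(1 / 2) * quadForm 𝒯₂⁻¹ w₂)
    have hmax : max (-(1 / 2) * quadForm 𝒯₁⁻¹ w₁) (-(1 / 2) * quadForm 𝒯₂⁻¹ w₂)
        ≤ -(α * r ^ 2) := by
      apply max_le
      · have hg := hige₁ w₁
        rw [hα_def]
        nlinarith only [hg, hrsq, hβ0]
      · have hg := hige₂ w₂
        rw [hα_def]
        nlinarith only [hg, hrsq', hβ0]
    have habs : |(-(1 / 2) * quadForm 𝒯₁⁻¹ w₁) - (-(1 / 2) * quadForm 𝒯₂⁻¹ w₂)|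
        = (1 / 2) * |quadForm 𝒯₁⁻¹ w₁ - quadForm 𝒯₂⁻¹ w₂| := by
      rw [show (-(1 / 2) * quadForm 𝒯₁⁻¹ w₁) - (-(1 / 2) * quadForm 𝒯₂⁻¹ w₂)
          = -(1 / 2) * (quadForm 𝒯₁⁻¹ w₁ - quadForm 𝒯₂⁻¹ w₂) by ring, abs_mul]
      norm_num
    calc |E₁ - E₂|
        ≤ Real.exp (max (-(1 / 2) * quadForm 𝒯₁⁻¹ w₁) (-(1 / 2) * quadForm 𝒯₂⁻¹ w₂))
          * |(-(1 / 2) * quadForm 𝒯₁⁻¹ w₁) - (-(1 / 2) * quadForm 𝒯₂⁻¹ w₂)| := h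
      _ ≤ G * ((1 / 2) * |quadForm 𝒯₁⁻¹ w₁ - quadForm 𝒯₂⁻¹ w₂|) := by
          rw [habs]
          apply mul_le_mul_of_nonneg_right _ (by positivity)
          exact Real.exp_le_exp.mpr hmax
  -- central estimate
  have hMabs : |gaussianM ρ₁ U₁ 𝒯₁ v - gaussianM ρ₂ U₂ 𝒯₂ v|
      ≤ |ρ₁ - ρ₂| * (E₁ / D₁) + ρ₂ * |1 / D₁ - 1 / D₂| * E₁ + ρ₂ / D₂ * |E₁ - E₂| := by
    have hdecomp : gaussianM ρ₁ U₁ 𝒯₁ v - gaussianM ρ₂ U₂ 𝒯₂ v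
        = (ρ₁ - ρ₂) * (E₁ / D₁) + ρ₂ * (1 / D₁ - 1 / D₂) * E₁ + ρ₂ / D₂ * (E₁ - E₂) := by
      rw [hM₁, hM₂]; ring
    rw [hdecomp]
    have hρ₂0 : 0 < ρ₂ := lt_of_lt_of_le hρm hρ₂.1
    calc |(ρ₁ - ρ₂) * (E₁ / D₁) + ρ₂ * (1 / D₁ - 1 / D₂) * E₁ + ρ₂ / D₂ * (E₁ - E₂)|
        ≤ |(ρ₁ - ρ₂) * (E₁ / D₁)| + |ρ₂ * (1 / D₁ - 1 / D₂) * E₁| + |ρ₂ / D₂ * (E₁ - E₂)| :=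
          (abs_add_le _ _).trans (add_le_add_left (abs_add_le _ _) _)
      _ = |ρ₁ - ρ₂| * (E₁ / D₁) + ρ₂ * |1 / D₁ - 1 / D₂| * E₁ + ρ₂ / D₂ * |E₁ - E₂| := by
          rw [abs_mul (ρ₁ - ρ₂) (E₁ / D₁), abs_mul (ρ₂ * (1 / D₁ - 1 / D₂)) E₁,
            abs_mul ρ₂ (1 / D₁ - 1 / D₂), abs_mul (ρ₂ / D₂) (E₁ - E₂),
            abs_of_pos (div_pos hE₁pos hD₁pos), abs_of_pos hρ₂0, abs_of_pos hE₁pos,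
            abs_of_pos (div_pos hρ₂0 hD₂pos)]
  have hterm1 : |ρ₁ - ρ₂| * (E₁ / D₁) ≤ G * (c₁ * |ρ₁ - ρ₂|) := by
    have h : E₁ / D₁ ≤ G / Dlo := div_le_div₀ hGpos.le hE₁le hDlo hD₁ge
    calc |ρ₁ - ρ₂| * (E₁ / D₁) ≤ |ρ₁ - ρ₂| * (G / Dlo) :=
          mul_le_mul_of_nonneg_left h (abs_nonneg _)
      _ = G * (c₁ * |ρ₁ - ρ₂|) := by rw [hc₁def]; ring
  have hρ₂M : ρ₂ ≤ ρM := hρ₂.2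
  have hρ₂0 : 0 < ρ₂ := lt_of_lt_of_le hρm hρ₂.1
  have hterm2 : ρ₂ * |1 / D₁ - 1 / D₂| * E₁
      ≤ G * (ρM * 9 * (2 * π) ^ 3 * lM ^ 2 / Dlo ^ 3 * S) := by
    calc ρ₂ * |1 / D₁ - 1 / D₂| * E₁
        ≤ ρM * (9 * (2 * π) ^ 3 * lM ^ 2 * S / Dlo ^ 3) * G := by
          apply mul_le_mul (mul_le_mul hρ₂M hDdiff (abs_nonneg _) hρM.le) hE₁le hE₁pos.le
          positivity
      _ = G * (ρM * 9 * (2 * π) ^ 3 * lM ^ 2 / Dlo ^ 3 * S) := by ring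
  have hterm3 : ρ₂ / D₂ * |E₁ - E₂|
      ≤ G * ((ρM / Dlo) * (1 / 2)
          * (lm⁻¹ * ((2 + 2 * uM) * (1 + r)) * dU
            + 81 * (lm⁻¹ ^ 2 * S) * ((1 + 2 * uM) * (1 + r)) ^ 2)) := by
    have hQ : |quadForm 𝒯₁⁻¹ w₁ - quadForm 𝒯₂⁻¹ w₂|
        ≤ lm⁻¹ * ((2 + 2 * uM) * (1 + r)) * dU
          + 81 * (lm⁻¹ ^ 2 * S) * ((1 + 2 * uM) * (1 + r)) ^ 2 := by
      calc |quadForm 𝒯₁⁻¹ w₁ - quadForm 𝒯₂⁻¹ w₂|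
          ≤ |quadForm 𝒯₁⁻¹ w₁ - quadForm 𝒯₁⁻¹ w₂| + |quadForm 𝒯₁⁻¹ w₂ - quadForm 𝒯₂⁻¹ w₂| := by
            have e : quadForm 𝒯₁⁻¹ w₁ - quadForm 𝒯₂⁻¹ w₂
                = (quadForm 𝒯₁⁻¹ w₁ - quadForm 𝒯₁⁻¹ w₂)
                  + (quadForm 𝒯₁⁻¹ w₂ - quadForm 𝒯₂⁻¹ w₂) := by ring
            rw [e]
            exact abs_add_le _ _
        _ ≤ _ := add_le_add hQA hQB
    have hρD : ρ₂ / D₂ ≤ ρM / Dlo := div_le_div₀ hρM.le hρ₂M hDlo hD₂ge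
    calc ρ₂ / D₂ * |E₁ - E₂|
        ≤ (ρM / Dlo) * (G * ((1 / 2) * |quadForm 𝒯₁⁻¹ w₁ - quadForm 𝒯₂⁻¹ w₂|)) := by
          apply mul_le_mul hρD hEdiff (abs_nonneg _) (div_nonneg hρM.le hDlo.le)
      _ ≤ (ρM / Dlo) * (G * ((1 / 2) * (lm⁻¹ * ((2 + 2 * uM) * (1 + r)) * dU
            + 81 * (lm⁻¹ ^ 2 * S) * ((1 + 2 * uM) * (1 + r)) ^ 2))) := by
          apply mul_le_mul_of_nonneg_left _ (div_nonneg hρM.le hDlo.le)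
          apply mul_le_mul_of_nonneg_left _ hGpos.le
          exact mul_le_mul_of_nonneg_left hQ (by norm_num)
      _ = G * ((ρM / Dlo) * (1 / 2)
          * (lm⁻¹ * ((2 + 2 * uM) * (1 + r)) * dU
            + 81 * (lm⁻¹ ^ 2 * S) * ((1 + 2 * uM) * (1 + r)) ^ 2)) := by ring
  -- combine to polynomial-weighted bound
  have hone_le : (1:ℝ) ≤ (1 + r) ^ 2 := by nlinarith only [hr0, sq_nonneg r]
  have hone_le1 : (1:ℝ) + r ≤ (1 + r) ^ 2 := by nlinarith only [hr0, sq_nonneg r]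
  have hcentral : |gaussianM ρ₁ U₁ 𝒯₁ v - gaussianM ρ₂ U₂ 𝒯₂ v|
      ≤ G * (1 + r) ^ 2 * (c₁ * |ρ₁ - ρ₂| + c₂ * dU + c₃ * S) := by
    have h1 : G * (c₁ * |ρ₁ - ρ₂|) ≤ G * (1 + r) ^ 2 * (c₁ * |ρ₁ - ρ₂|) := by
      have hnn := mul_nonneg hc₁0.le (abs_nonneg (ρ₁ - ρ₂))
      calc G * (c₁ * |ρ₁ - ρ₂|) = G * (c₁ * |ρ₁ - ρ₂|) * 1 := by ring
        _ ≤ G * (c₁ * |ρ₁ - ρ₂|) * (1 + r) ^ 2 :=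
            mul_le_mul_of_nonneg_left hone_le (mul_nonneg hGpos.le hnn)
        _ = G * (1 + r) ^ 2 * (c₁ * |ρ₁ - ρ₂|) := by ring
    have h2 : G * (ρM * 9 * (2 * π) ^ 3 * lM ^ 2 / Dlo ^ 3 * S)
        ≤ G * (1 + r) ^ 2 * (ρM * 9 * (2 * π) ^ 3 * lM ^ 2 / Dlo ^ 3 * S) := by
      have hnn : (0:ℝ) ≤ ρM * 9 * (2 * π) ^ 3 * lM ^ 2 / Dlo ^ 3 * S := by
        apply mul_nonneg _ hS0
        apply div_nonneg _ (by positivity)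
        positivity
      calc G * (ρM * 9 * (2 * π) ^ 3 * lM ^ 2 / Dlo ^ 3 * S)
          = G * (ρM * 9 * (2 * π) ^ 3 * lM ^ 2 / Dlo ^ 3 * S) * 1 := by ring
        _ ≤ G * (ρM * 9 * (2 * π) ^ 3 * lM ^ 2 / Dlo ^ 3 * S) * (1 + r) ^ 2 :=
            mul_le_mul_of_nonneg_left hone_le (mul_nonneg hGpos.le hnn)
        _ = G * (1 + r) ^ 2 * (ρM * 9 * (2 * π) ^ 3 * lM ^ 2 / Dlo ^ 3 * S) := by ring
    have h3 : G * ((ρM / Dlo) * (1 / 2)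
          * (lm⁻¹ * ((2 + 2 * uM) * (1 + r)) * dU
            + 81 * (lm⁻¹ ^ 2 * S) * ((1 + 2 * uM) * (1 + r)) ^ 2))
        ≤ G * (1 + r) ^ 2 * (c₂ * dU
            + (ρM / Dlo) * (1 / 2) * (81 * lm⁻¹ ^ 2 * (1 + 2 * uM) ^ 2) * S) := by
      have e1 : (ρM / Dlo) * (1 / 2) * (lm⁻¹ * ((2 + 2 * uM) * (1 + r)) * dU)
          = (1 + r) * (c₂ * dU) := by rw [hc₂def]; ring
      have e2 : (ρM / Dlo) * (1 / 2) * (81 * (lm⁻¹ ^ 2 * S) * ((1 + 2 * uM) * (1 + r)) ^ 2)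
          = (1 + r) ^ 2 * ((ρM / Dlo) * (1 / 2) * (81 * lm⁻¹ ^ 2 * (1 + 2 * uM) ^ 2) * S) := by
        ring
      have hc₂dU : 0 ≤ c₂ * dU := mul_nonneg hc₂0 hdU0
      have hterm : 0 ≤ (ρM / Dlo) * (1 / 2) * (81 * lm⁻¹ ^ 2 * (1 + 2 * uM) ^ 2) * S := by
        apply mul_nonneg _ hS0
        exact mul_nonneg (mul_nonneg (div_nonneg hρM.le hDlo.le) (by norm_num)) (by positivity)
      have expand : (ρM / Dlo) * (1 / 2)
          * (lm⁻¹ * ((2 + 2 * uM) * (1 + r)) * dU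
            + 81 * (lm⁻¹ ^ 2 * S) * ((1 + 2 * uM) * (1 + r)) ^ 2)
          = (1 + r) * (c₂ * dU)
            + (1 + r) ^ 2 * ((ρM / Dlo) * (1 / 2) * (81 * lm⁻¹ ^ 2 * (1 + 2 * uM) ^ 2) * S) := by
        rw [← e1, ← e2]; ring
      rw [expand]
      have step : (1 + r) * (c₂ * dU)
            + (1 + r) ^ 2 * ((ρM / Dlo) * (1 / 2) * (81 * lm⁻¹ ^ 2 * (1 + 2 * uM) ^ 2) * S)
          ≤ (1 + r) ^ 2 * (c₂ * dU
            + (ρM / Dlo) * (1 / 2) * (81 * lm⁻¹ ^ 2 * (1 + 2 * uM) ^ 2) * S) := by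
        have hmono : (1 + r) * (c₂ * dU) ≤ (1 + r) ^ 2 * (c₂ * dU) :=
          mul_le_mul_of_nonneg_right hone_le1 hc₂dU
        rw [mul_add]
        exact add_le_add hmono le_rfl
      calc G * ((1 + r) * (c₂ * dU)
            + (1 + r) ^ 2 * ((ρM / Dlo) * (1 / 2) * (81 * lm⁻¹ ^ 2 * (1 + 2 * uM) ^ 2) * S))
          ≤ G * ((1 + r) ^ 2 * (c₂ * dU
            + (ρM / Dlo) * (1 / 2) * (81 * lm⁻¹ ^ 2 * (1 + 2 * uM) ^ 2) * S)) :=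
            mul_le_mul_of_nonneg_left step hGpos.le
        _ = G * (1 + r) ^ 2 * (c₂ * dU
            + (ρM / Dlo) * (1 / 2) * (81 * lm⁻¹ ^ 2 * (1 + 2 * uM) ^ 2) * S) := by ring
    calc |gaussianM ρ₁ U₁ 𝒯₁ v - gaussianM ρ₂ U₂ 𝒯₂ v|
        ≤ |ρ₁ - ρ₂| * (E₁ / D₁) + ρ₂ * |1 / D₁ - 1 / D₂| * E₁ + ρ₂ / D₂ * |E₁ - E₂| := hMabs
      _ ≤ G * (c₁ * |ρ₁ - ρ₂|) + G * (ρM * 9 * (2 * π) ^ 3 * lM ^ 2 / Dlo ^ 3 * S)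
            + G * ((ρM / Dlo) * (1 / 2)
              * (lm⁻¹ * ((2 + 2 * uM) * (1 + r)) * dU
                + 81 * (lm⁻¹ ^ 2 * S) * ((1 + 2 * uM) * (1 + r)) ^ 2)) :=
          add_le_add (add_le_add hterm1 hterm2) hterm3
      _ ≤ G * (1 + r) ^ 2 * (c₁ * |ρ₁ - ρ₂|)
            + G * (1 + r) ^ 2 * (ρM * 9 * (2 * π) ^ 3 * lM ^ 2 / Dlo ^ 3 * S)
            + G * (1 + r) ^ 2 * (c₂ * dU
              + (ρM / Dlo) * (1 / 2) * (81 * lm⁻¹ ^ 2 * (1 + 2 * uM) ^ 2) * S) :=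
          add_le_add (add_le_add h1 h2) h3
      _ = G * (1 + r) ^ 2 * (c₁ * |ρ₁ - ρ₂| + c₂ * dU + c₃ * S) := by
          rw [hc₃def]; ring
  -- weight bound
  have hWle : (1 + enorm3 v) ^ q ≤ K * (1 + r) ^ (m : ℕ) := by
    have henv0 : 0 ≤ enorm3 v := enorm3_nonneg v
    calc (1 + enorm3 v) ^ q ≤ (1 + uM + r) ^ q :=
          Real.rpow_le_rpow (by linarith) (by linarith [henv]) hq
      _ ≤ ((1 + uM) * (1 + r)) ^ q :=
          Real.rpow_le_rpow (by linarith) (by linarith only [mul_nonneg huM hr0, hr0, huM]) hq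
      _ = (1 + uM) ^ q * (1 + r) ^ q := Real.mul_rpow (by linarith) (by linarith)
      _ ≤ K * (1 + r) ^ (m : ℕ) := by
          rw [hKdef]
          exact mul_le_mul_of_nonneg_left (rpow_le_pow_ceil hq hr0)
            (Real.rpow_nonneg (by linarith) q)
  -- final
  have hpoly : (1 + r) ^ (m : ℕ) * ((1 + r) ^ 2 * G) ≤ B := by
    have := hB r hr0
    calc (1 + r) ^ (m : ℕ) * ((1 + r) ^ 2 * G)
        = (1 + r) ^ (m + 2) * G := by rw [pow_add]; ring
      _ ≤ B := hB r hr0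
  have hsum_nonneg : 0 ≤ c₁ * |ρ₁ - ρ₂| + c₂ * dU + c₃ * S := by
    have := mul_nonneg hc₁0.le (abs_nonneg (ρ₁ - ρ₂))
    have := mul_nonneg hc₂0 hdU0
    have := mul_nonneg hc₃0 hS0
    linarith
  have hcoef : c₁ * |ρ₁ - ρ₂| + c₂ * dU + c₃ * S
      ≤ (c₁ + c₂ + c₃) * (|ρ₁ - ρ₂| + dU + S) := by
    nlinarith only [mul_nonneg hc₁0.le hdU0, mul_nonneg hc₁0.le hS0,
      mul_nonneg hc₂0 (abs_nonneg (ρ₁ - ρ₂)), mul_nonneg hc₂0 hS0,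
      mul_nonneg hc₃0 (abs_nonneg (ρ₁ - ρ₂)), mul_nonneg hc₃0 hdU0]
  have hW0 : 0 ≤ (1 + enorm3 v) ^ q := Real.rpow_nonneg (by linarith [enorm3_nonneg v]) q
  calc (1 + enorm3 v) ^ q * |gaussianM ρ₁ U₁ 𝒯₁ v - gaussianM ρ₂ U₂ 𝒯₂ v|
      ≤ (K * (1 + r) ^ (m : ℕ)) * (G * (1 + r) ^ 2 * (c₁ * |ρ₁ - ρ₂| + c₂ * dU + c₃ * S)) := by
        apply mul_le_mul hWle hcentral (abs_nonneg _)
        exact mul_nonneg hK0.le (by positivity)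
    _ = K * ((1 + r) ^ (m : ℕ) * ((1 + r) ^ 2 * G)) * (c₁ * |ρ₁ - ρ₂| + c₂ * dU + c₃ * S) := by
        ring
    _ ≤ K * B * (c₁ * |ρ₁ - ρ₂| + c₂ * dU + c₃ * S) := by
        apply mul_le_mul_of_nonneg_right _ hsum_nonneg
        exact mul_le_mul_of_nonneg_left hpoly hK0.le
    _ ≤ K * B * ((c₁ + c₂ + c₃) * (|ρ₁ - ρ₂| + dU + S)) := by
        apply mul_le_mul_of_nonneg_left hcoef (mul_nonneg hK0.le hB0.le)
    _ = K * B * (c₁ + c₂ + c₃) * (|ρ₁ - ρ₂| + dU + S) := by ring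

end
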